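/- Let d ≥ 1 and let (u_i)_{i=1}^{d²} be a SIC system on ℂ^d. Then Σ_{i=1}^{d²} (1/d)·|u_i ⊗ ū_i⟩⟨u_i ⊗ ū_i| = T_inv, i.e., the SIC-POVM realizes the operator T_inv := |φ⁰⟩⟨φ⁰| + (1/(d+1))(I − |φ⁰⟩⟨φ⁰|) on ℂ^d ⊗ ℂ^d. -/

import Mathlib

open scoped BigOperators ComplexInnerProductSpace
open Matrix MeasureTheory

noncomputable section

/-- `ℂ^d` with the standard Hermitian inner product. -/
abbrev V (d : ℕ) : Type := EuclideanSpace ℂ (Fin d)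

/-- `ℂ^d ⊗ ℂ^d`, identified with functions on `Fin d × Fin d`. -/
abbrev V2 (d : ℕ) : Type := EuclideanSpace ℂ (Fin d × Fin d)

/-- operators on `ℂ^d ⊗ ℂ^d`, as matrices. -/
abbrev Op2 (d : ℕ) : Type := Matrix (Fin d × Fin d) (Fin d × Fin d) ℂ

/-- tensor (Kronecker) product of vectors. -/
def tens {d : ℕ} (u v : V d) : V2 d := WithLp.toLp 2 (fun p : Fin d × Fin d => u p.1 * v p.2)

/-- entrywise complex conjugate `ū` of a vector. -/
def cvec {d : ℕ} (u : V d) : V d := WithLp.toLp 2 (fun k => starRingEnd ℂ (u k))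

/-- the maximally entangled state `φ⁰ = (1/√d) Σ_k e_k ⊗ e_k`. -/
def phi0 (d : ℕ) : V2 d := WithLp.toLp 2 (fun p : Fin d × Fin d => if p.1 = p.2 then ((Real.sqrt d : ℂ))⁻¹ else 0)

/-- the rank-one operator `|w⟩⟨w|`. -/
def outer {d : ℕ} (w : V2 d) : Op2 d := Matrix.of fun p q => w p * starRingEnd ℂ (w q)

/-- `T_inv = |φ⁰⟩⟨φ⁰| + (1/(d+1))(I - |φ⁰⟩⟨φ⁰|)`. -/
def Tinv (d : ℕ) : Op2 d := outer (phi0 d) + (1 / ((d : ℂ) + 1)) • (1 - outer (phi0 d))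


/-- A SIC system on `ℂ^d`: `d²` unit vectors with `|⟨u_i, u_j⟩|² = 1/(d+1)` for `i ≠ j`. -/
def IsSIC {d : ℕ} (u : Fin (d ^ 2) → V d) : Prop :=
  (∀ i, ‖u i‖ = 1) ∧ ∀ i j, i ≠ j → ‖⟪u i, u j⟫‖ ^ 2 = 1 / (d + 1)

/-- Frobenius inner product. -/
def Fip {d : ℕ} (A B : Op2 d) : ℂ := ∑ p, ∑ q, (starRingEnd ℂ) (A p q) * B p q

lemma Fip_add_left {d : ℕ} (A B C : Op2 d) : Fip (A + B) C = Fip A C + Fip B C := by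
  simp [Fip, add_mul, Finset.sum_add_distrib]

lemma Fip_add_right {d : ℕ} (A B C : Op2 d) : Fip A (B + C) = Fip A B + Fip A C := by
  simp [Fip, mul_add, Finset.sum_add_distrib]

lemma Fip_sub_left {d : ℕ} (A B C : Op2 d) : Fip (A - B) C = Fip A C - Fip B C := by
  simp [Fip, sub_mul, Finset.sum_sub_distrib]

lemma Fip_sub_right {d : ℕ} (A B C : Op2 d) : Fip A (B - C) = Fip A B - Fip A C := by
  simp [Fip, mul_sub, Finset.sum_sub_distrib]

lemma Fip_smul_left {d : ℕ} (c : ℂ) (A B : Op2 d) :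
    Fip (c • A) B = (starRingEnd ℂ) c * Fip A B := by
  simp [Fip, Finset.mul_sum, mul_assoc]

lemma Fip_smul_right {d : ℕ} (c : ℂ) (A B : Op2 d) : Fip A (c • B) = c * Fip A B := by
  simp only [Fip, Matrix.smul_apply, smul_eq_mul, Finset.mul_sum]
  congr 1; ext p; congr 1; ext q; ring

lemma Fip_zero_left {d : ℕ} (B : Op2 d) : Fip 0 B = 0 := by simp [Fip]
lemma Fip_zero_right {d : ℕ} (B : Op2 d) : Fip B 0 = 0 := by simp [Fip]

lemma Fip_sum_left {d : ℕ} {ι : Type*} (s : Finset ι) (A : ι → Op2 d) (B : Op2 d) :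
    Fip (∑ i ∈ s, A i) B = ∑ i ∈ s, Fip (A i) B := by
  classical
  induction s using Finset.induction_on with
  | empty => simp [Fip_zero_left]
  | insert _ _ h ih => simp [Finset.sum_insert h, Fip_add_left, ih]

lemma Fip_sum_right {d : ℕ} {ι : Type*} (s : Finset ι) (A : Op2 d) (B : ι → Op2 d) :
    Fip A (∑ i ∈ s, B i) = ∑ i ∈ s, Fip A (B i) := by
  classical
  induction s using Finset.induction_on with
  | empty => simp [Fip_zero_right]
  | insert _ _ h ih => simp [Finset.sum_insert h, Fip_add_right, ih]

lemma Fip_self_eq_zero {d : ℕ} {A : Op2 d} (h : Fip A A = 0) : A = 0 := by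
  have h2 : ∑ p, ∑ q, (‖A p q‖ : ℝ) ^ 2 = 0 := by
    have he : Fip A A = ((∑ p, ∑ q, (‖A p q‖ : ℝ) ^ 2 : ℝ) : ℂ) := by
      simp [Fip, Complex.conj_mul']
    rw [he] at h
    exact_mod_cast h
  ext p q
  have hnn : ∀ p ∈ (Finset.univ : Finset (Fin d × Fin d)),
      (0:ℝ) ≤ ∑ q, (‖A p q‖ : ℝ) ^ 2 :=
    fun p _ => Finset.sum_nonneg fun q _ => sq_nonneg _
  have h3 := (Finset.sum_eq_zero_iff_of_nonneg hnn).1 h2 p (Finset.mem_univ p)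
  have h4 := (Finset.sum_eq_zero_iff_of_nonneg
    (fun q _ => sq_nonneg (‖A p q‖))).1 h3 q (Finset.mem_univ q)
  have h5 := pow_eq_zero_iff (n := 2) (by norm_num) |>.1 h4
  simpa using h5

lemma inner_tens {d : ℕ} (a b a' b' : V d) :
    (⟪tens a b, tens a' b'⟫ : ℂ) = ⟪a, a'⟫ * ⟪b, b'⟫ := by
  simp only [tens, PiLp.inner_apply, RCLike.inner_apply, PiLp.toLp_apply]
  rw [Fintype.sum_prod_type, Finset.sum_mul_sum]
  congr 1; ext k; congr 1; ext l
  simp only [_root_.map_mul]; ring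

lemma inner_cvec {d : ℕ} (a b : V d) : (⟪cvec a, cvec b⟫ : ℂ) = ⟪b, a⟫ := by
  simp only [cvec, PiLp.inner_apply, RCLike.inner_apply, Complex.conj_conj, PiLp.toLp_apply]
  congr 1; ext k; ring

lemma Fip_outer_outer {d : ℕ} (w v : V2 d) :
    Fip (outer w) (outer v) = ⟪w, v⟫ * ⟪v, w⟫ := by
  simp only [Fip, outer, Matrix.of_apply, PiLp.inner_apply, RCLike.inner_apply,
    _root_.map_mul, Complex.conj_conj]
  rw [Finset.sum_mul_sum]
  congr 1; ext p; congr 1; ext q; ring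

lemma Fip_outer_one {d : ℕ} (w : V2 d) : Fip (outer w) 1 = ⟪w, w⟫ := by
  simp only [Fip, outer, Matrix.of_apply, Matrix.one_apply, mul_ite, mul_one, mul_zero,
    Finset.sum_ite_eq, Finset.mem_univ, if_pos, PiLp.inner_apply, RCLike.inner_apply,
    _root_.map_mul, Complex.conj_conj, if_true]
  exact Finset.sum_congr rfl fun _ _ => mul_comm _ _

lemma Fip_one_outer {d : ℕ} (w : V2 d) : Fip 1 (outer w) = ⟪w, w⟫ := by
  simp only [Fip, outer, Matrix.of_apply, Matrix.one_apply, apply_ite, _root_.map_one,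
    map_zero, ite_mul, one_mul, zero_mul, Finset.sum_ite_eq, Finset.mem_univ, if_true,
    PiLp.inner_apply, RCLike.inner_apply]

lemma Fip_one_one {d : ℕ} : Fip (1 : Op2 d) 1 = ((d : ℂ))^2 := by
  simp only [Fip, Matrix.one_apply, apply_ite, _root_.map_one, map_zero, ite_mul, one_mul,
    zero_mul, Finset.sum_ite_eq, Finset.mem_univ, if_true, mul_ite, mul_one, mul_zero]
  simp [Finset.card_univ, sq]

/-- A SIC-POVM realizes `T_inv`: `Σ_i (1/d)|u_i ⊗ ū_i⟩⟨u_i ⊗ ū_i| = T_inv`. -/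
theorem stmt3 (d : ℕ) (hd : 1 ≤ d) (u : Fin (d ^ 2) → V d) (hu : IsSIC u) :
    ∑ i, ((d : ℂ))⁻¹ • outer (tens (u i) (cvec (u i))) = Tinv d := by
  obtain ⟨hnorm, hangle⟩ := hu
  have hd0 : (d : ℂ) ≠ 0 := Nat.cast_ne_zero.2 (by omega)
  have hd1 : (d : ℂ) + 1 ≠ 0 := by
    have h : ((d + 1 : ℕ) : ℂ) ≠ 0 := Nat.cast_ne_zero.2 (by omega)
    push_cast at h; exact h
  set w : Fin (d ^ 2) → V2 d := fun i => tens (u i) (cvec (u i)) with hw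
  set φ : V2 d := phi0 d with hφ
  set e : ℂ := ((d : ℂ) + 1)⁻¹ with he
  -- inner product values
  have huu : ∀ i, (⟪u i, u i⟫ : ℂ) = 1 := by
    intro i; rw [inner_self_eq_norm_sq_to_K, hnorm]; norm_num
  have hww_diag : ∀ i, (⟪w i, w i⟫ : ℂ) = 1 := by
    intro i; rw [hw]; simp only []
    rw [inner_tens, inner_cvec, huu]; norm_num [huu]
  have hww_off : ∀ i j, i ≠ j → (⟪w i, w j⟫ : ℂ) = e := by
    intro i j hij
    rw [hw]; simp only []
    rw [inner_tens, inner_cvec, ← inner_conj_symm (u j) (u i), Complex.mul_conj,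
      Complex.normSq_eq_norm_sq, hangle i j hij, he]
    push_cast
    rw [one_div]
  have hφw : ∀ i, (⟪φ, w i⟫ : ℂ) = ((Real.sqrt d : ℂ))⁻¹ := by
    intro i
    simp only [PiLp.inner_apply, RCLike.inner_apply, hφ, phi0, hw, tens, cvec, PiLp.toLp_apply]
    rw [Fintype.sum_prod_type]
    have h1 : ∀ k : Fin d, ∑ l : Fin d,
        (starRingEnd ℂ) (if k = l then ((Real.sqrt d : ℂ))⁻¹ else 0) *
          (u i k * (starRingEnd ℂ) (u i l))
        = ((Real.sqrt d : ℂ))⁻¹ * ((starRingEnd ℂ) (u i k) * u i k) := by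
      intro k
      rw [Finset.sum_eq_single k (fun l _ hl => by simp [if_neg (Ne.symm hl)]) (by simp)]
      simp only [if_pos rfl, if_true, map_inv₀, Complex.conj_ofReal]
      ring
    have hc : ∀ k l : Fin d, (u i k * (starRingEnd ℂ) (u i l)) *
        (starRingEnd ℂ) (if k = l then ((Real.sqrt d : ℂ))⁻¹ else 0) =
        (starRingEnd ℂ) (if k = l then ((Real.sqrt d : ℂ))⁻¹ else 0) *
        (u i k * (starRingEnd ℂ) (u i l)) := fun _ _ => mul_comm _ _
    simp only [hc]
    rw [Finset.sum_congr rfl fun k _ => h1 k, ← Finset.mul_sum]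
    have h2 : ∑ k, (starRingEnd ℂ) (u i k) * u i k = 1 := by
      rw [← huu i]; simp only [PiLp.inner_apply, RCLike.inner_apply]
      exact Finset.sum_congr rfl fun _ _ => mul_comm _ _
    rw [h2, mul_one]
  have hwφ : ∀ i, (⟪w i, φ⟫ : ℂ) = ((Real.sqrt d : ℂ))⁻¹ := by
    intro i
    rw [← inner_conj_symm, hφw i, map_inv₀, Complex.conj_ofReal]
  have hsqrt : ((Real.sqrt d : ℂ))⁻¹ * ((Real.sqrt d : ℂ))⁻¹ = ((d:ℂ))⁻¹ := by
    rw [← mul_inv, ← Complex.ofReal_mul, Real.mul_self_sqrt (Nat.cast_nonneg d)]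
    norm_num
  have hφφ : (⟪φ, φ⟫ : ℂ) = 1 := by
    simp only [PiLp.inner_apply, RCLike.inner_apply, hφ, phi0, PiLp.toLp_apply]
    rw [Fintype.sum_prod_type]
    have h1 : ∀ k : Fin d, ∑ l : Fin d, (starRingEnd ℂ)
        (if k = l then ((Real.sqrt d : ℂ))⁻¹ else 0) *
        (if k = l then ((Real.sqrt d : ℂ))⁻¹ else 0) = ((d:ℂ))⁻¹ := by
      intro k
      rw [Finset.sum_eq_single k (fun l _ hl => by simp [if_neg (Ne.symm hl)]) (by simp)]
      simp only [if_pos rfl, if_true, map_inv₀, Complex.conj_ofReal, hsqrt]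
    have hc : ∀ k l : Fin d, (if k = l then ((Real.sqrt d : ℂ))⁻¹ else 0) *
        (starRingEnd ℂ) (if k = l then ((Real.sqrt d : ℂ))⁻¹ else 0) =
        (starRingEnd ℂ) (if k = l then ((Real.sqrt d : ℂ))⁻¹ else 0) *
        (if k = l then ((Real.sqrt d : ℂ))⁻¹ else 0) := fun _ _ => mul_comm _ _
    simp only [hc]
    rw [Finset.sum_congr rfl fun k _ => h1 k, Finset.sum_const, Finset.card_univ,
      Fintype.card_fin, nsmul_eq_mul]
    field_simp
  -- Frobenius values
  set W : Fin (d ^ 2) → Op2 d := fun i => outer (w i) with hW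
  set P : Op2 d := outer φ with hP
  have hWW : ∀ i j, Fip (W i) (W j) = if i = j then 1 else e ^ 2 := by
    intro i j
    by_cases h : i = j
    · subst h; rw [if_pos rfl, hW]; simp only []
      rw [Fip_outer_outer, hww_diag, one_mul]
    · rw [if_neg h, hW]; simp only []
      rw [Fip_outer_outer, hww_off i j h, hww_off j i (Ne.symm h), sq]
  have hWP : ∀ i, Fip (W i) P = ((d:ℂ))⁻¹ := by
    intro i; rw [hW, hP]; simp only []
    rw [Fip_outer_outer, hwφ, hφw, hsqrt]
  have hPW : ∀ i, Fip P (W i) = ((d:ℂ))⁻¹ := by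
    intro i; rw [hW, hP]; simp only []
    rw [Fip_outer_outer, hwφ, hφw, hsqrt]
  have hPP : Fip P P = 1 := by rw [hP, Fip_outer_outer, hφφ, one_mul]
  have hW1 : ∀ i, Fip (W i) 1 = 1 := fun i => by
    rw [hW]; simp only []; rw [Fip_outer_one, hww_diag]
  have h1W : ∀ i, Fip 1 (W i) = 1 := fun i => by
    rw [hW]; simp only []; rw [Fip_one_outer, hww_diag]
  have hP1 : Fip P 1 = 1 := by rw [hP, Fip_outer_one, hφφ]
  have h1P : Fip 1 P = 1 := by rw [hP, Fip_one_outer, hφφ]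
  have h11 : Fip (1 : Op2 d) 1 = ((d:ℂ))^2 := Fip_one_one
  -- abbreviations
  set S : Op2 d := ∑ i, ((d : ℂ))⁻¹ • W i with hS
  have hT : Tinv d = P + (1 / ((d : ℂ) + 1)) • (1 - P) := rfl
  have hce : (1 : ℂ) / ((d : ℂ) + 1) = e := one_div _
  have hconjd : (starRingEnd ℂ) ((d:ℂ)⁻¹) = (d:ℂ)⁻¹ := by simp
  have hconje : (starRingEnd ℂ) e = e := by
    rw [he, map_inv₀, map_add, _root_.map_one, Complex.conj_natCast]
  have hcard : ((Fintype.card (Fin (d ^ 2)) : ℕ) : ℂ) = (d:ℂ)^2 := by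
    rw [Fintype.card_fin]; push_cast; ring
  -- sum of Fip (W i) (W j) over j
  have hsumWW : ∀ i, ∑ j, Fip (W i) (W j) = 1 + ((d:ℂ)^2 - 1) * e^2 := by
    intro i
    have h1 : ∀ j, Fip (W i) (W j) = (if i = j then 1 - e^2 else 0) + e^2 := by
      intro j; rw [hWW i j]; split_ifs <;> ring
    rw [Finset.sum_congr rfl fun j _ => h1 j, Finset.sum_add_distrib,
      Finset.sum_ite_eq, if_pos (Finset.mem_univ i), Finset.sum_const,
      Finset.card_univ, nsmul_eq_mul, hcard]
    ring
  -- Fip of W i against Tinv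
  have hWT : ∀ i, Fip (W i) (Tinv d) = (d:ℂ)⁻¹ + e * (1 - (d:ℂ)⁻¹) := by
    intro i
    rw [hT, hce, Fip_add_right, Fip_smul_right, Fip_sub_right, hWP i, hW1 i]
  have hTW : ∀ i, Fip (Tinv d) (W i) = (d:ℂ)⁻¹ + e * (1 - (d:ℂ)⁻¹) := by
    intro i
    rw [hT, hce, Fip_add_left, Fip_smul_left, Fip_sub_left, hPW i, h1W i, hconje]
  -- the four Frobenius values
  have hFSS : Fip S S = (d:ℂ)^2 * ((d:ℂ)⁻¹ * ((d:ℂ)⁻¹ * (1 + ((d:ℂ)^2 - 1) * e^2))) := by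
    rw [hS, Fip_sum_left]
    have h1 : ∀ i : Fin (d^2), Fip ((d:ℂ)⁻¹ • W i) (∑ j, (d:ℂ)⁻¹ • W j)
        = (d:ℂ)⁻¹ * ((d:ℂ)⁻¹ * (1 + ((d:ℂ)^2 - 1) * e^2)) := by
      intro i
      rw [Fip_smul_left, hconjd, Fip_sum_right]
      congr 1
      rw [Finset.sum_congr rfl fun j _ => Fip_smul_right _ _ _, ← Finset.mul_sum, hsumWW i]
    rw [Finset.sum_congr rfl fun i _ => h1 i, Finset.sum_const, Finset.card_univ,
      nsmul_eq_mul, hcard]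
  have hFST : Fip S (Tinv d) = (d:ℂ)^2 * ((d:ℂ)⁻¹ * ((d:ℂ)⁻¹ + e * (1 - (d:ℂ)⁻¹))) := by
    rw [hS, Fip_sum_left]
    have h1 : ∀ i : Fin (d^2), Fip ((d:ℂ)⁻¹ • W i) (Tinv d)
        = (d:ℂ)⁻¹ * ((d:ℂ)⁻¹ + e * (1 - (d:ℂ)⁻¹)) := by
      intro i; rw [Fip_smul_left, hconjd, hWT i]
    rw [Finset.sum_congr rfl fun i _ => h1 i, Finset.sum_const, Finset.card_univ,
      nsmul_eq_mul, hcard]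
  have hFTS : Fip (Tinv d) S = (d:ℂ)^2 * ((d:ℂ)⁻¹ * ((d:ℂ)⁻¹ + e * (1 - (d:ℂ)⁻¹))) := by
    rw [hS, Fip_sum_right]
    have h1 : ∀ i : Fin (d^2), Fip (Tinv d) ((d:ℂ)⁻¹ • W i)
        = (d:ℂ)⁻¹ * ((d:ℂ)⁻¹ + e * (1 - (d:ℂ)⁻¹)) := by
      intro i; rw [Fip_smul_right, hTW i]
    rw [Finset.sum_congr rfl fun i _ => h1 i, Finset.sum_const, Finset.card_univ,
      nsmul_eq_mul, hcard]
  have hFTT : Fip (Tinv d) (Tinv d) = 1 + e^2 * ((d:ℂ)^2 - 1) := by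
    rw [hT, hce]
    simp only [Fip_add_left, Fip_add_right, Fip_smul_left, Fip_smul_right, Fip_sub_left,
      Fip_sub_right, hconje, hPP, hP1, h1P, h11]
    ring
  -- conclude
  have hzero : Fip (S - Tinv d) (S - Tinv d) = 0 := by
    rw [Fip_sub_left, Fip_sub_right, Fip_sub_right, hFSS, hFST, hFTS, hFTT, he]
    field_simp
    ring
  have := Fip_self_eq_zero hzero
  have hST : S = Tinv d := by
    have := sub_eq_zero.mp this
    exact this
  rw [← hST, hS]
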